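/- (Z-Separating Re-embedding) Let I ⊆ M = ⟨x_1,...,x_n⟩ be an ideal with a Z-separating σ-Gröbner basis { (1/c_1)f_1, ..., (1/c_s)f_s, g_1,...,g_t } for Z = {z_1,...,z_s}, and let P̂ = K[X∖Z]. Define the K-algebra homomorphism φ: P → P̂ by φ(x_i) = x_i if x_i ∉ Z and φ(z_j) = tail_{z_j}(f_j). Then the composition of φ with the projection P̂ → P̂/(I ∩ P̂) has kernel exactly I, and hence φ induces a K-algebra isomorphism Φ: P/I ≅ P̂/(I ∩ P̂). -/

import Mathlib

open MvPolynomial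

/-- A term ordering on the monomials of `K[x_1,...,x_n]`: a linear order on
exponent vectors compatible with addition and with `1` as smallest term. -/
structure TermOrder (n : ℕ) where
  le : (Fin n →₀ ℕ) → (Fin n →₀ ℕ) → Prop
  le_refl : ∀ m, le m m
  le_trans : ∀ a b c, le a b → le b c → le a c
  le_antisymm : ∀ a b, le a b → le b a → a = b
  le_total : ∀ a b, le a b ∨ le b a
  add_le_add : ∀ a b c, le a b → le (a + c) (b + c)
  zero_le : ∀ m, le 0 m

variable {K : Type*} [Field K] {n s : ℕ}

/-- `m` is the `σ`-leading term of `f`. -/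
def TermOrder.IsLeadingTerm (σ : TermOrder n) (f : MvPolynomial (Fin n) K)
    (m : Fin n →₀ ℕ) : Prop :=
  m ∈ f.support ∧ ∀ m' ∈ f.support, σ.le m' m

/-- `G` is a `σ`-Gröbner basis of the set `S` (typically an ideal or an
elimination ideal): `G ⊆ S` and the leading term of every nonzero element of `S`
is divisible by the leading term of some element of `G`. -/
def IsGBOn (σ : TermOrder n) (S G : Set (MvPolynomial (Fin n) K)) : Prop :=
  G ⊆ S ∧ ∀ f ∈ S, f ≠ 0 → ∃ g ∈ G, ∃ mg mf, σ.IsLeadingTerm g mg ∧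
    σ.IsLeadingTerm f mf ∧ mg ≤ mf

/-- `G` is the reduced `σ`-Gröbner basis of `S`: a monic, fully interreduced
`σ`-Gröbner basis. -/
def IsReducedGBOn (σ : TermOrder n) (S G : Set (MvPolynomial (Fin n) K)) : Prop :=
  IsGBOn σ S G ∧
  (∀ g ∈ G, ∃ m, σ.IsLeadingTerm g m ∧ MvPolynomial.coeff m g = 1) ∧
  (∀ g ∈ G, ∀ m ∈ g.support, ∀ g' ∈ G, ∀ m', σ.IsLeadingTerm g' m' → m' ≤ m →
    g' = g ∧ m' = m)

/-- The indeterminate `z` divides some term in the support of `f`. -/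
def Occurs (z : Fin n) (f : MvPolynomial (Fin n) K) : Prop :=
  ∃ m ∈ f.support, m z ≠ 0

/-- `tail_z(f) = z - (1/c) f`, where `c` is the coefficient of `z` in `f`. -/
noncomputable def tailTo (f : MvPolynomial (Fin n) K) (z : Fin n) :
    MvPolynomial (Fin n) K :=
  X z - (MvPolynomial.coeff (Finsupp.single z 1) f)⁻¹ • f

/-- `f` is `z`-separating: the coefficient of `z` in `f` is nonzero and `z`
divides no term in the support of `tail_z(f)`. -/
def IsSeparating (f : MvPolynomial (Fin n) K) (z : Fin n) : Prop :=
  MvPolynomial.coeff (Finsupp.single z 1) f ≠ 0 ∧ ¬ Occurs z (tailTo f z)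

/-- `(f_1,...,f_s)` is coherently `Z`-separating for `Z = {z_1,...,z_s}`. -/
def CoherentlySeparating (z : Fin s → Fin n) (f : Fin s → MvPolynomial (Fin n) K) : Prop :=
  Function.Injective z ∧ (∀ i, f i ≠ 0 ∧ IsSeparating (f i) (z i)) ∧
  ∀ i j, j ≠ i → ¬ Occurs (z i) (f j)

/-- The `M`-linear part of `f` for `M = ⟨x_1-a_1,...,x_n-a_n⟩`. -/
noncomputable def linPart (a : Fin n → K) (f : MvPolynomial (Fin n) K) :
    MvPolynomial (Fin n) K :=
  (MvPolynomial.aeval fun i => X i - C (a i))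
    (MvPolynomial.homogeneousComponent 1 ((MvPolynomial.aeval fun i => X i + C (a i)) f))

/-- The `M`-linear part of an ideal `I`: the `K`-span of `{Lin_M(f) : f ∈ I}`. -/
noncomputable def linSpace (a : Fin n → K) (I : Ideal (MvPolynomial (Fin n) K)) :
    Submodule K (MvPolynomial (Fin n) K) :=
  Submodule.span K (linPart a '' (I : Set (MvPolynomial (Fin n) K)))

/-- The linear maximal ideal `M = ⟨x_1-a_1,...,x_n-a_n⟩`. -/
noncomputable def linMaxIdeal (a : Fin n → K) : Ideal (MvPolynomial (Fin n) K) :=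
  Ideal.span (Set.range fun i => X i - C (a i))

/-- `M_1`, the `K`-vector space spanned by `x_1-a_1,...,x_n-a_n`. -/
noncomputable def linForms (a : Fin n → K) : Submodule K (MvPolynomial (Fin n) K) :=
  Submodule.span K (Set.range fun i => X i - C (a i))

/-- The elimination ideal `I ∩ K[X∖Z]`, viewed as the set of polynomials of `I`
in which no indeterminate of `Z` occurs. -/
def elimSet (z : Fin s → Fin n) (I : Ideal (MvPolynomial (Fin n) K)) :
    Set (MvPolynomial (Fin n) K) :=
  {p | p ∈ I ∧ ∀ i, ¬ Occurs (z i) p}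

/-- `r` is the normal form of `p` with respect to (the reduced Gröbner basis of)
`S`: `p - r ∈ S` and no term of `r` is divisible by a leading term of `S`. -/
def IsNormalFormOn (σ : TermOrder n) (S : Set (MvPolynomial (Fin n) K))
    (p r : MvPolynomial (Fin n) K) : Prop :=
  p - r ∈ S ∧ ∀ f ∈ S, f ≠ 0 → ∀ mf m, σ.IsLeadingTerm f mf → m ∈ r.support → ¬ mf ≤ m

/-- `σ` is a `Z`-separating term ordering for `I`. -/
def IsZSepOrder (σ : TermOrder n) (z : Fin s → Fin n)
    (I : Ideal (MvPolynomial (Fin n) K)) : Prop :=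
  ∃ p : Fin s → MvPolynomial (Fin n) K,
    (∀ i, p i ∈ I ∧ p i ≠ 0 ∧ σ.IsLeadingTerm (p i) (Finsupp.single (z i) 1)) ∧
    CoherentlySeparating z p

open Classical in
/-- The substitution `x_i ↦ x_i` for `x_i ∉ Z` and `z_j ↦ tail_{z_j}(f_j)`. -/
noncomputable def subMap (z : Fin s → Fin n) (f : Fin s → MvPolynomial (Fin n) K)
    (i : Fin n) : MvPolynomial (Fin n) K :=
  if h : ∃ j, z j = i then tailTo (f h.choose) (z h.choose) else X i

open Classical in
/-- The projection of `P` onto `P̂ = K[X∖Z]`. -/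
noncomputable def killZ (z : Fin s → Fin n) :
    MvPolynomial (Fin n) K →ₐ[K] MvPolynomial {i : Fin n // ¬ ∃ j, z j = i} K :=
  MvPolynomial.aeval fun i => if h : ∃ j, z j = i then 0 else X ⟨i, h⟩

/-- The elimination ideal `I ∩ P̂` as an ideal of `P̂ = K[X∖Z]`. -/
noncomputable def elimIdeal (z : Fin s → Fin n) (I : Ideal (MvPolynomial (Fin n) K)) :
    Ideal (MvPolynomial {i : Fin n // ¬ ∃ j, z j = i} K) :=
  Ideal.comap (MvPolynomial.rename
    (Subtype.val : {i : Fin n // ¬ ∃ j, z j = i} → Fin n)).toRingHom I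

/-- The composition `ψ : P → P̂ → P̂/(I ∩ P̂)` of the substitution
`z_j ↦ tail_{z_j}(f_j)` with the canonical projection. -/
noncomputable def reembedHom (z : Fin s → Fin n) (f : Fin s → MvPolynomial (Fin n) K)
    (I : Ideal (MvPolynomial (Fin n) K)) :
    MvPolynomial (Fin n) K →+*
      (MvPolynomial {i : Fin n // ¬ ∃ j, z j = i} K ⧸ elimIdeal z I) :=
  (Ideal.Quotient.mk (elimIdeal z I)).comp
    (((killZ z).comp (MvPolynomial.aeval (subMap z f))).toRingHom)

/-- The cotangent space `m/m²` as a `K`-vector space. -/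
abbrev cotSpace (K : Type*) [Field K] {R : Type*} [CommRing R] [Algebra K R]
    (m : Ideal R) :=
  (m.restrictScalars K) ⧸
    Submodule.comap (Submodule.subtype (m.restrictScalars K)) ((m ^ 2).restrictScalars K)

/-- The embedding dimension of an affine `K`-algebra `R`: the minimal number `m`
of indeterminates of a presentation `R ≅ K[y_1,...,y_m]/I'`. -/
noncomputable def edim (K : Type*) [Field K] (R : Type*) [CommRing R] [Algebra K R] : ℕ :=
  sInf {m | ∃ I' : Ideal (MvPolynomial (Fin m) K),
    Nonempty (R ≃ₐ[K] (MvPolynomial (Fin m) K ⧸ I'))}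

/-- A marked reduced Gröbner basis of `I`: a reduced `σ`-Gröbner basis together
with the marking of the `σ`-leading term of each element. -/
def IsMarkedReducedGB (I : Ideal (MvPolynomial (Fin n) K))
    (G : Set ((Fin n →₀ ℕ) × MvPolynomial (Fin n) K)) : Prop :=
  ∃ σ : TermOrder n, IsReducedGBOn σ (I : Set (MvPolynomial (Fin n) K)) (Prod.snd '' G) ∧
    ∀ p ∈ G, σ.IsLeadingTerm p.2 p.1

/-- **The `Z`-Separating Re-embedding.** The composition
`ψ : P → P̂ → P̂/(I ∩ P̂)` of the substitution `x_i ↦ x_i` (`x_i ∉ Z`),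
`z_j ↦ tail_{z_j}(f_j)` with the canonical projection has kernel exactly `I` and is
surjective; hence it induces a `K`-algebra isomorphism `P/I ≅ P̂/(I ∩ P̂)`. -/
theorem statement11 (z : Fin s → Fin n) (f : Fin s → MvPolynomial (Fin n) K)
    (I : Ideal (MvPolynomial (Fin n) K)) (hI : I ≤ linMaxIdeal (0 : Fin n → K))
    (hfI : ∀ i, f i ∈ I ∧ f i ≠ 0)
    (hcs : CoherentlySeparating z f) (σ : TermOrder n)
    (hlt : ∀ i, σ.IsLeadingTerm (f i) (Finsupp.single (z i) 1))
    (t : ℕ) (g : Fin t → MvPolynomial (Fin n) K)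
    (hg : IsReducedGBOn σ (elimSet z I) (Set.range g))
    (hGB : IsGBOn σ (I : Set (MvPolynomial (Fin n) K))
      ((Set.range fun i =>
        (MvPolynomial.coeff (Finsupp.single (z i) 1) (f i))⁻¹ • f i) ∪ Set.range g)) :
    RingHom.ker (reembedHom z f I) = I ∧
    Function.Surjective (reembedHom z f I) := by
  classical
  obtain ⟨hzinj, hsep, hcoh⟩ := hcs
  set S : Set (Fin n) := {i | ¬ ∃ j, z j = i} with hSdef
  -- subMap i ≡ X i mod I
  have hsub_sub : ∀ i, subMap z f i - X i ∈ I := by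
    intro i
    rw [subMap]
    split
    · rename_i h
      have hj : z h.choose = i := h.choose_spec
      have : tailTo (f h.choose) (z h.choose) - X i =
          -(C ((MvPolynomial.coeff (Finsupp.single (z h.choose) 1) (f h.choose))⁻¹) *
            f h.choose) := by
        rw [tailTo, smul_eq_C_mul, hj]; ring
      rw [this]
      exact I.neg_mem (I.mul_mem_left _ (hfI h.choose).1)
    · simp only [sub_self]; exact I.zero_mem
  -- substitution lemma: aeval (subMap) p ≡ p mod I
  have hA : ∀ p : MvPolynomial (Fin n) K, (aeval (subMap z f)) p - p ∈ I := by
    intro p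
    induction p using MvPolynomial.induction_on with
    | C a => simp [I.zero_mem]
    | add p q hp hq =>
      have : (aeval (subMap z f)) (p + q) - (p + q) =
          ((aeval (subMap z f)) p - p) + ((aeval (subMap z f)) q - q) := by
        rw [map_add]; ring
      rw [this]; exact I.add_mem hp hq
    | mul_X p i hp =>
      have : (aeval (subMap z f)) (p * X i) - p * X i =
          (aeval (subMap z f)) p * (subMap z f i - X i) +
            ((aeval (subMap z f)) p - p) * X i := by
        rw [map_mul, aeval_X]; ring
      rw [this]
      exact I.add_mem (I.mul_mem_left _ (hsub_sub i)) (I.mul_mem_right _ hp)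
  -- subMap values involve no Z-variable
  have hsupp : ∀ i, subMap z f i ∈ supported K S := by
    intro i
    rw [mem_supported]
    intro v hv
    simp only [Finset.mem_coe] at hv
    rintro ⟨k, rfl⟩
    revert hv
    rw [subMap]
    split
    · rename_i h
      set j := h.choose with hjdef
      intro hv
      rw [mem_vars] at hv
      obtain ⟨d, hd, hdk⟩ := hv
      rw [Finsupp.mem_support_iff] at hdk
      by_cases hkj : k = j
      · exact (hsep j).2.2 ⟨d, hd, by rw [← hkj]; exact hdk⟩
      · -- d ∈ support of tail(f j); tail = X (z j) - c⁻¹ • f j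
        have hd' : d ∈ (X (z j) : MvPolynomial (Fin n) K).support ∪
            ((MvPolynomial.coeff (Finsupp.single (z j) 1) (f j))⁻¹ • f j).support :=
          MvPolynomial.support_sub _ _ _ (by rw [tailTo] at hd; exact hd)
        rcases Finset.mem_union.mp hd' with h1 | h2
        · rw [MvPolynomial.support_X, Finset.mem_singleton] at h1
          subst h1
          rw [Finsupp.single_apply] at hdk
          split at hdk
          · rename_i he; exact hkj (hzinj he.symm)
          · exact hdk rfl
        · exact hcoh k j (fun he => hkj he.symm)
            ⟨d, MvPolynomial.support_smul h2, hdk⟩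
    · intro hv
      rw [vars_X, Finset.mem_singleton] at hv
      rename_i h
      exact h ⟨k, hv⟩
  have hα : ∀ p : MvPolynomial (Fin n) K, (aeval (subMap z f)) p ∈ supported K S := by
    intro p
    induction p using MvPolynomial.induction_on with
    | C a => rw [aeval_C]; exact (supported K S).algebraMap_mem a
    | add p q hp hq => rw [map_add]; exact (supported K S).add_mem hp hq
    | mul_X p i hp =>
      rw [map_mul, aeval_X]; exact (supported K S).mul_mem hp (hsupp i)
  -- killZ is a retraction of rename val
  have hkr : ∀ q : MvPolynomial {i : Fin n // ¬ ∃ j, z j = i} K,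
      killZ z (rename Subtype.val q) = q := by
    have : (killZ z).comp (rename (Subtype.val :
        {i : Fin n // ¬ ∃ j, z j = i} → Fin n)) = AlgHom.id K _ := by
      apply MvPolynomial.algHom_ext
      intro i
      simp only [AlgHom.comp_apply, rename_X, AlgHom.id_apply, killZ, aeval_X]
      rw [dif_neg i.2]
    intro q
    have := congrArg (fun φ => φ q) this
    simpa using this
  have hret : ∀ p ∈ supported K S, rename Subtype.val (killZ z p) = p := by
    intro p hp
    rw [supported_eq_range_rename] at hp
    obtain ⟨q, rfl⟩ := hp
    exact congrArg (rename Subtype.val) (hkr q)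
  -- compute reembedHom on renamed polynomials
  have hαr : ∀ q : MvPolynomial {i : Fin n // ¬ ∃ j, z j = i} K,
      (aeval (subMap z f)) (rename Subtype.val q) = rename Subtype.val q := by
    intro q
    rw [aeval_rename]
    have : (subMap z f ∘ (Subtype.val : {i : Fin n // ¬ ∃ j, z j = i} → Fin n)) =
        fun i => X i.val := by
      funext i
      simp only [Function.comp_apply, subMap]
      rw [dif_neg i.2]
    rw [this]
    induction q using MvPolynomial.induction_on with
    | C a => simp [algebraMap_eq]
    | add p q hp hq => simp only [map_add, hp, hq]
    | mul_X p i hp => simp only [map_mul, hp, aeval_X, rename_X]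
  constructor
  · ext p
    rw [RingHom.mem_ker]
    have hψ : reembedHom z f I p =
        Ideal.Quotient.mk (elimIdeal z I) (killZ z ((aeval (subMap z f)) p)) := rfl
    rw [hψ, Ideal.Quotient.eq_zero_iff_mem, elimIdeal, Ideal.mem_comap]
    have hrw : (rename (Subtype.val :
        {i : Fin n // ¬ ∃ j, z j = i} → Fin n)).toRingHom
        (killZ z ((aeval (subMap z f)) p)) = (aeval (subMap z f)) p :=
      hret _ (hα p)
    rw [hrw]
    constructor
    · intro h
      have := I.sub_mem h (hA p)
      simpa using this
    · intro h
      have := I.add_mem (hA p) h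
      simpa using this
  · intro y
    obtain ⟨q, rfl⟩ := Ideal.Quotient.mk_surjective y
    refine ⟨rename Subtype.val q, ?_⟩
    have hψ : reembedHom z f I (rename Subtype.val q) =
        Ideal.Quotient.mk (elimIdeal z I)
          (killZ z ((aeval (subMap z f)) (rename Subtype.val q))) := rfl
    rw [hψ, hαr, hkr]
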